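/- Let k be a positive even integer and let s be a vertex of an (s,k)-edge-connected finite graph G. If the degree of s is even and positive, then the complement of the k-lifting graph L(G,s,k) is disconnected. -/

import Mathlib

/-- A multigraph: parallel edges allowed, no loops. Each edge `e` has a pair of
distinct end-vertices `ends e`. -/
structure Multigraph (V : Type u) (E : Type v) where
  ends : E → Sym2 V
  no_loops : ∀ e : E, ¬ (ends e).IsDiag

namespace Multigraph

variable {V : Type u} {E : Type v}

/-- A walk in a multigraph, recorded as the sequence of traversed edges. -/
inductive Walk (G : Multigraph V E) : V → V → Type (max u v)
  | nil (v : V) : Walk G v v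
  | cons {u v w : V} (e : E) (h : G.ends e = s(u, v)) (p : Walk G v w) : Walk G u w

namespace Walk

variable {G : Multigraph V E}

/-- The list of edges traversed by a walk. -/
def edges : ∀ {a b : V}, G.Walk a b → List E
  | _, _, .nil _ => []
  | _, _, .cons e _ p => e :: p.edges

/-- The list of vertices visited by a walk. -/
def support : ∀ {a b : V}, G.Walk a b → List V
  | a, _, .nil _ => [a]
  | a, _, .cons _ _ p => a :: p.support

/-- A walk is a path if it has no repeated vertices. -/
def IsPath {a b : V} (p : G.Walk a b) : Prop := p.support.Nodup

end Walk

/-- `G` is `k`-edge-connected: between any two distinct vertices there are `k`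
pairwise edge-disjoint paths. -/
def EdgeConnected (G : Multigraph V E) (k : ℕ) : Prop :=
  ∀ u v : V, u ≠ v → ∃ P : Fin k → G.Walk u v,
    (∀ i, (P i).IsPath) ∧ ∀ i j, i ≠ j → ∀ e, e ∈ (P i).edges → e ∉ (P j).edges

/-- `G` is weakly `k`-linked: for every `k` pairs of vertices `(s i, t i)` with
`s i ≠ t i` there are pairwise edge-disjoint paths `P i` joining `s i` and `t i`. -/
def WeaklyLinked (G : Multigraph V E) (k : ℕ) : Prop :=
  ∀ s t : Fin k → V, (∀ i, s i ≠ t i) →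
    ∃ P : (i : Fin k) → G.Walk (s i) (t i),
      (∀ i, (P i).IsPath) ∧ ∀ i j, i ≠ j → ∀ e, e ∈ (P i).edges → e ∉ (P j).edges

end Multigraph

namespace Multigraph

variable {V : Type u} {E : Type v}

/-- `G` is `(s,k)`-edge-connected: between any two distinct vertices different
from `s` there are `k` pairwise edge-disjoint paths (possibly through `s`). -/
def SEdgeConnected (G : Multigraph V E) (s : V) (k : ℕ) : Prop :=
  ∀ u v : V, u ≠ s → v ≠ s → u ≠ v → ∃ P : Fin k → G.Walk u v,
    (∀ i, (P i).IsPath) ∧ ∀ i j, i ≠ j → ∀ e, e ∈ (P i).edges → e ∉ (P j).edges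

/-- The lift `G_{sx,sy}`: delete the edges `e₁ = sx` and `e₂ = sy` and add a new
edge joining `x` and `y`; if `x = y` no new edge is added (the loop is deleted). -/
def lift (G : Multigraph V E) (e₁ e₂ : E) (x y : V) :
    Multigraph V ({e : E // e ≠ e₁ ∧ e ≠ e₂} ⊕ PLift (x ≠ y)) where
  ends := Sum.elim (fun e => G.ends e.1) (fun _ => s(x, y))
  no_loops := by
    rintro (e | h)
    · exact G.no_loops e.1
    · intro hd
      exact h.down (Sym2.mk_isDiag_iff.mp hd)

/-- The pair of edges `e₁, e₂` incident with `s` is `k`-liftable: the lift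
`G_{e₁,e₂}` is `(s,k)`-edge-connected. -/
def Liftable (G : Multigraph V E) (s : V) (k : ℕ) (e₁ e₂ : E) : Prop :=
  e₁ ≠ e₂ ∧ ∃ x y : V, G.ends e₁ = s(s, x) ∧ G.ends e₂ = s(s, y) ∧
    (G.lift e₁ e₂ x y).SEdgeConnected s k

/-- The `k`-lifting graph `L(G,s,k)`: its vertices are the edges of `G` incident
with `s`, two of them being adjacent iff they form a `k`-liftable pair. -/
def liftingGraph (G : Multigraph V E) (s : V) (k : ℕ) :
    SimpleGraph {e : E // s ∈ G.ends e} where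
  Adj f₁ f₂ := G.Liftable s k f₁.1 f₂.1 ∨ G.Liftable s k f₂.1 f₁.1
  symm := ⟨fun _ _ h => h.symm⟩
  loopless := ⟨fun f h => by rcases h with h | h <;> exact h.1 rfl⟩

/-- The degree of a vertex: the number of edges incident with it. -/
noncomputable def degree (G : Multigraph V E) (v : V) : ℕ :=
  {e : E | v ∈ G.ends e}.ncard

end Multigraph
namespace Multigraph

open Finset

open scoped Classical

variable {V : Type u} {E : Type v}

section Flow

variable [Fintype V] [Fintype E]

/-- Edges oriented into `w` by the partial orientation `S`. -/
noncomputable def inw (S : E → Option (V × V)) (w : V) : Finset E :=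
  univ.filter (fun e => ∃ a, S e = some (a, w))

/-- Edges oriented out of `w`. -/
noncomputable def outw (S : E → Option (V × V)) (w : V) : Finset E :=
  univ.filter (fun e => ∃ b, S e = some (w, b))

/-- Excess of `w`: in-degree minus out-degree under `S`. -/
noncomputable def exc (S : E → Option (V × V)) (w : V) : ℤ :=
  ((inw S w).card : ℤ) - ((outw S w).card : ℤ)

lemma mem_inw {S : E → Option (V × V)} {x : V} {e : E} :
    e ∈ inw S x ↔ ∃ a, S e = some (a, x) := by simp [inw]

lemma mem_outw {S : E → Option (V × V)} {x : V} {e : E} :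
    e ∈ outw S x ↔ ∃ b, S e = some (x, b) := by simp [outw]

variable (G : Multigraph V E)

/-- The orientation respects the edge ends. -/
def ValidO (S : E → Option (V × V)) : Prop :=
  ∀ e a b, S e = some (a, b) → G.ends e = s(a, b)

def IsFlow (S : E → Option (V × V)) (u v : V) (m : ℕ) : Prop :=
  G.ValidO S ∧ exc S u = -(m : ℤ) ∧ exc S v = (m : ℤ) ∧
    ∀ w, w ≠ u → w ≠ v → exc S w = 0

lemma exc_update_add (S : E → Option (V × V)) (e : E) (a b : V) (h : S e = none) (x : V) :
    exc (Function.update S e (some (a, b))) x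
      = exc S x + (if x = b then 1 else 0) - (if x = a then 1 else 0) := by
  have hei : e ∉ inw S x := by
    rw [mem_inw]; rintro ⟨a', ha'⟩; rw [h] at ha'; exact nomatch ha'
  have heo : e ∉ outw S x := by
    rw [mem_outw]; rintro ⟨b', hb'⟩; rw [h] at hb'; exact nomatch hb'
  have hin : inw (Function.update S e (some (a, b))) x
      = if x = b then insert e (inw S x) else inw S x := by
    ext e'
    rw [mem_inw]
    by_cases he : e' = e
    · subst he
      rw [Function.update_self]
      by_cases hb : x = b
      · subst hb
        simp [mem_insert]
      · rw [if_neg hb]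
        constructor
        · rintro ⟨a', ha'⟩
          rw [Option.some.injEq, Prod.mk.injEq] at ha'
          exact (hb ha'.2.symm).elim
        · intro hmem
          exact (hei hmem).elim
    · rw [Function.update_of_ne he]
      by_cases hb : x = b
      · rw [if_pos hb, mem_insert]
        rw [← mem_inw]
        tauto
      · rw [if_neg hb, ← mem_inw]
  have hout : outw (Function.update S e (some (a, b))) x
      = if x = a then insert e (outw S x) else outw S x := by
    ext e'
    rw [mem_outw]
    by_cases he : e' = e
    · subst he
      rw [Function.update_self]
      by_cases hb : x = a
      · subst hb
        simp [mem_insert]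
      · rw [if_neg hb]
        constructor
        · rintro ⟨a', ha'⟩
          rw [Option.some.injEq, Prod.mk.injEq] at ha'
          exact (hb ha'.1.symm).elim
        · intro hmem
          exact (heo hmem).elim
    · rw [Function.update_of_ne he]
      by_cases hb : x = a
      · rw [if_pos hb, mem_insert]
        rw [← mem_outw]
        tauto
      · rw [if_neg hb, ← mem_outw]
  rw [exc, exc, hin, hout]
  split_ifs <;>
    push_cast [card_insert_of_notMem hei, card_insert_of_notMem heo] <;> ring

lemma exc_update_del (S : E → Option (V × V)) (e : E) (a b : V) (h : S e = some (a, b)) (x : V) :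
    exc (Function.update S e none) x
      = exc S x + (if x = a then 1 else 0) - (if x = b then 1 else 0) := by
  have key := exc_update_add (Function.update S e none) e a b (Function.update_self _ _ _) x
  have hS : Function.update (Function.update S e none) e (some (a, b)) = S := by
    funext e'
    by_cases he : e' = e
    · subst he; simp [h]
    · simp [Function.update_of_ne he]
  rw [hS] at key
  omega

end Flow

end Multigraph
namespace Multigraph

open Finset

open scoped Classical

variable {V : Type u} {E : Type v}

section Flow2

variable [Fintype V] [Fintype E]

/-- Edges oriented by `S` from outside `X` into `X`. -/
noncomputable def inX (S : E → Option (V × V)) (X : Set V) : Finset E :=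
  univ.filter (fun e => ∃ a b, S e = some (a, b) ∧ a ∉ X ∧ b ∈ X)

/-- Edges oriented by `S` from `X` to outside `X`. -/
noncomputable def outX (S : E → Option (V × V)) (X : Set V) : Finset E :=
  univ.filter (fun e => ∃ a b, S e = some (a, b) ∧ a ∈ X ∧ b ∉ X)

lemma sum_exc (S : E → Option (V × V)) (X : Set V) :
    ∑ w ∈ univ.filter (· ∈ X), exc S w
      = ((inX S X).card : ℤ) - ((outX S X).card : ℤ) := by
  have hw : ∀ w, exc S w = ∑ e : E,
      ((if (∃ a, S e = some (a, w)) then (1 : ℤ) else 0)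
        - (if (∃ b, S e = some (w, b)) then (1 : ℤ) else 0)) := by
    intro w
    rw [Finset.sum_sub_distrib]
    rw [exc, inw, outw, card_filter, card_filter]
    push_cast
    ring
  calc ∑ w ∈ univ.filter (· ∈ X), exc S w
      = ∑ w ∈ univ.filter (· ∈ X), ∑ e : E,
          ((if (∃ a, S e = some (a, w)) then (1 : ℤ) else 0)
            - (if (∃ b, S e = some (w, b)) then (1 : ℤ) else 0)) := by
        exact Finset.sum_congr rfl (fun w _ => hw w)
    _ = ∑ e : E, ∑ w ∈ univ.filter (· ∈ X),
          ((if (∃ a, S e = some (a, w)) then (1 : ℤ) else 0)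
            - (if (∃ b, S e = some (w, b)) then (1 : ℤ) else 0)) := Finset.sum_comm
    _ = ∑ e : E, ((if e ∈ inX S X then (1 : ℤ) else 0) - (if e ∈ outX S X then (1 : ℤ) else 0)) := by
        refine Finset.sum_congr rfl (fun e _ => ?_)
        rcases hS : S e with _ | ⟨a, b⟩
        · have h1 : e ∉ inX S X := by
            simp [inX, hS]
          have h2 : e ∉ outX S X := by
            simp [outX, hS]
          rw [if_neg h1, if_neg h2]
          refine Finset.sum_eq_zero (fun w _ => ?_)
          simp [hS]
        · have hsum : ∀ w ∈ univ.filter (· ∈ X),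
              ((if (∃ a', some (a, b) = some (a', w)) then (1 : ℤ) else 0)
                - (if (∃ b', some (a, b) = some (w, b')) then (1 : ℤ) else 0))
              = ((if w = b then (1 : ℤ) else 0) - (if w = a then (1 : ℤ) else 0)) := by
            intro w _
            have h1 : (∃ a', some (a, b) = some (a', w)) ↔ w = b := by
              constructor
              · rintro ⟨a', h⟩
                rw [Option.some.injEq, Prod.ext_iff] at h
                exact h.2.symm
              · rintro rfl
                exact ⟨a, rfl⟩
            have h2 : (∃ b', some (a, b) = some (w, b')) ↔ w = a := by
              constructor
              · rintro ⟨b', h⟩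
                rw [Option.some.injEq, Prod.ext_iff] at h
                exact h.1.symm
              · rintro rfl
                exact ⟨b, rfl⟩
            simp only [h1, h2]
          rw [Finset.sum_congr rfl hsum, Finset.sum_sub_distrib,
            Finset.sum_ite_eq' (univ.filter (· ∈ X)) b (fun _ => (1 : ℤ)),
            Finset.sum_ite_eq' (univ.filter (· ∈ X)) a (fun _ => (1 : ℤ))]
          have hin : e ∈ inX S X ↔ (a ∉ X ∧ b ∈ X) := by
            simp only [inX, mem_filter, mem_univ, true_and, hS, Option.some.injEq,
              Prod.mk.injEq]
            constructor
            · rintro ⟨a', b', ⟨rfl, rfl⟩, h⟩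
              exact h
            · intro h
              exact ⟨a, b, ⟨rfl, rfl⟩, h⟩
          have hout : e ∈ outX S X ↔ (a ∈ X ∧ b ∉ X) := by
            simp only [outX, mem_filter, mem_univ, true_and, hS, Option.some.injEq,
              Prod.mk.injEq]
            constructor
            · rintro ⟨a', b', ⟨rfl, rfl⟩, h⟩
              exact h
            · intro h
              exact ⟨a, b, ⟨rfl, rfl⟩, h⟩
          simp only [mem_filter, mem_univ, true_and, hin, hout]
          by_cases ha : a ∈ X <;> by_cases hb : b ∈ X <;> simp [ha, hb]
    _ = ((inX S X).card : ℤ) - ((outX S X).card : ℤ) := by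
        have hcard : ∀ (T : Finset E), (∑ x : E, if x ∈ T then (1 : ℤ) else 0) = T.card := by
          intro T
          rw [Finset.sum_ite_mem, Finset.univ_inter, Finset.sum_const, nsmul_eq_mul, mul_one]
        rw [Finset.sum_sub_distrib, hcard, hcard]
  
variable (G : Multigraph V E)

/-- The crossing edges of a vertex set `X`. -/
noncomputable def cutF (X : Set V) : Finset E :=
  univ.filter (fun e => ∃ a b, G.ends e = s(a, b) ∧ a ∈ X ∧ b ∉ X)

/-- The number of edges crossing `X`. -/
noncomputable def dcut (X : Set V) : ℕ := (G.cutF X).card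

lemma flow_sum {S : E → Option (V × V)} {u v : V} {m : ℕ} (hf : G.IsFlow S u v m)
    (huv : u ≠ v) (X : Set V) (hu : u ∈ X) (hv : v ∉ X) :
    ((inX S X).card : ℤ) - ((outX S X).card : ℤ) = -(m : ℤ) := by
  rw [← sum_exc]
  rw [Finset.sum_eq_single_of_mem u (by simp [hu])]
  · exact hf.2.1
  · intro w hwmem hwu
    refine hf.2.2.2 w hwu (fun hwv => hv ?_)
    rw [← hwv]
    exact (mem_filter.mp hwmem).2

end Flow2

end Multigraph
namespace Multigraph

open Finset

open scoped Classical

variable {V : Type u} {E : Type v}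

/-- A nodup chain can be extracted from any chain (vertices a sublist-as-set). -/
lemma exists_nodup_chain_aux {α : Type w} (R : α → α → Prop) (v : α) :
    ∀ n (l : List α) (u : α), l.length = n → List.Chain R u l →
      (u :: l).getLast (List.cons_ne_nil _ _) = v →
      ∃ l' : List α, List.Chain R u l' ∧
        (u :: l').getLast (List.cons_ne_nil _ _) = v ∧ (u :: l').Nodup ∧
        ∀ x ∈ l', x ∈ l := by
  intro n
  induction n using Nat.strong_induction_on with
  | _ n ih =>
    intro l u hlen hchain hlast
    by_cases hu : u ∈ l
    · obtain ⟨l₁, l₂, rfl⟩ := List.append_of_mem hu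
      have hsplit := (List.isChain_cons_split (l₁ := l₁) (l₂ := l₂)).mp hchain
      have hlast₂ : (u :: l₂).getLast (List.cons_ne_nil _ _) = v := by
        have hv : (u :: (l₁ ++ u :: l₂)).getLast? = some v := by
          rw [List.getLast?_eq_getLast (List.cons_ne_nil _ _), hlast]
        have h0 : ((u :: l₁) ++ u :: l₂).getLast? = (u :: l₂).getLast? :=
          List.getLast?_append_cons (u :: l₁) u l₂
        rw [List.getLast?_eq_getLast (l := u :: l₂) (List.cons_ne_nil _ _)] at h0
        rw [show ((u :: l₁) ++ u :: l₂ : List α) = u :: (l₁ ++ u :: l₂) from rfl, hv] at h0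
        exact Option.some_inj.mp h0.symm
      have hlt : l₂.length < n := by
        rw [← hlen]
        simp [List.length_append]
        omega
      obtain ⟨l', h1, h2, h3, h4⟩ := ih _ hlt l₂ u rfl hsplit.2 hlast₂
      exact ⟨l', h1, h2, h3, fun x hx => by simp [h4 x hx]⟩
    · match l, hchain with
      | [], _ =>
        refine ⟨[], List.IsChain.singleton _, hlast, by simp, by simp⟩
      | w :: t, hch =>
        obtain ⟨hr, hc⟩ := List.isChain_cons_cons.mp hch
        have hlt : t.length < n := by rw [← hlen]; simp
        have hlast' : (w :: t).getLast (List.cons_ne_nil _ _) = v := by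
          rwa [List.getLast_cons_cons] at hlast
        obtain ⟨l', h1, h2, h3, h4⟩ := ih _ hlt t w rfl hc hlast'
        refine ⟨w :: l', List.IsChain.cons_cons hr h1, ?_, ?_, ?_⟩
        · rwa [List.getLast_cons_cons]
        · refine List.nodup_cons.mpr ⟨?_, h3⟩
          intro hmem
          rcases List.mem_cons.mp hmem with rfl | hmem'
          · exact hu (List.mem_cons_self)
          · exact hu (List.mem_cons_of_mem _ (h4 _ hmem'))
        · intro x hx
          rcases List.mem_cons.mp hx with rfl | hx'
          · exact List.mem_cons_self
          · exact List.mem_cons_of_mem _ (h4 _ hx')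

lemma exists_nodup_chain {α : Type w} {R : α → α → Prop} {u v : α}
    (h : Relation.ReflTransGen R u v) :
    ∃ l : List α, List.Chain R u l ∧
      (u :: l).getLast (List.cons_ne_nil _ _) = v ∧ (u :: l).Nodup := by
  obtain ⟨l, hc, hl⟩ := List.exists_isChain_cons_of_relationReflTransGen h
  obtain ⟨l', h1, h2, h3, _⟩ := exists_nodup_chain_aux R v l.length l u rfl hc hl
  exact ⟨l', h1, h2, h3⟩

section Aug

variable [Fintype V] [Fintype E]

variable (G : Multigraph V E)

/-- A step along an oriented edge. -/
def Sstep (S : E → Option (V × V)) (a b : V) : Prop := ∃ e, S e = some (a, b)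

/-- A step in the residual graph. -/
def Rstep (S : E → Option (V × V)) (a b : V) : Prop :=
  (∃ e, S e = none ∧ G.ends e = s(a, b)) ∨ (∃ e, S e = some (b, a))

lemma augment_chain {v : V} :
    ∀ (l : List V) (S : E → Option (V × V)) (w : V), G.ValidO S →
      List.Chain (G.Rstep S) w l →
      (w :: l).getLast (List.cons_ne_nil _ _) = v → (w :: l).Nodup →
      ∃ S', G.ValidO S' ∧
        (∀ x, exc S' x = exc S x + (if x = v then 1 else 0) - (if x = w then 1 else 0)) ∧
        (∀ e, S' e ≠ S e → ∃ p q, G.ends e = s(p, q) ∧ p ∈ (w :: l) ∧ q ∈ (w :: l)) := by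
  intro l
  induction l with
  | nil =>
    intro S w hval _ hlast _
    have hw : w = v := by simpa using hlast
    subst hw
    exact ⟨S, hval, fun x => by simp, fun e he => (he rfl).elim⟩
  | cons w₁ t ihl =>
    intro S w hval hchain hlast hnodup
    have hchain' : List.Chain (G.Rstep S) w₁ t := (List.chain_cons.mp hchain).2
    have hstep : G.Rstep S w w₁ := (List.chain_cons.mp hchain).1
    have hlast' : (w₁ :: t).getLast (List.cons_ne_nil _ _) = v := by
      rwa [List.getLast_cons_cons] at hlast
    have hnodup' : (w₁ :: t).Nodup := (List.nodup_cons.mp hnodup).2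
    have hwnot : w ∉ w₁ :: t := (List.nodup_cons.mp hnodup).1
    obtain ⟨S₁, hval₁, hexc₁, hch₁⟩ := ihl S w₁ hval hchain' hlast' hnodup'
    rcases hstep with ⟨e, hnone, hends⟩ | ⟨e, hsome⟩
    · -- unused edge with ends s(w, w₁); orient it w → w₁
      have hS₁e : S₁ e = S e := by
        by_contra hne
        obtain ⟨p, q, hpq, hp, hq⟩ := hch₁ e hne
        rw [hends] at hpq
        rcases Sym2.eq_iff.mp hpq with ⟨rfl, rfl⟩ | ⟨rfl, rfl⟩
        · exact hwnot hp
        · exact hwnot hq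
      have hS₁none : S₁ e = none := by rw [hS₁e, hnone]
      refine ⟨Function.update S₁ e (some (w, w₁)), ?_, ?_, ?_⟩
      · intro e' a b h
        by_cases he : e' = e
        · subst he
          rw [Function.update_self, Option.some.injEq, Prod.ext_iff] at h
          obtain ⟨rfl, rfl⟩ := h
          exact hends
        · rw [Function.update_of_ne he] at h
          exact hval₁ e' a b h
      · intro x
        rw [exc_update_add S₁ e w w₁ hS₁none x, hexc₁ x]
        have hx : ¬(x = w₁ ∧ x = w) := by
          rintro ⟨rfl, rfl⟩
          exact hwnot (List.mem_cons_self)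
        by_cases h1 : x = v <;> by_cases h2 : x = w <;> by_cases h3 : x = w₁ <;>
          simp [h1, h2, h3] <;> omega
      · intro e' he'
        by_cases he : e' = e
        · subst he
          exact ⟨w, w₁, hends, List.mem_cons_self,
            List.mem_cons_of_mem _ (List.mem_cons_self)⟩
        · rw [Function.update_of_ne he] at he'
          by_cases hS₁ : S₁ e' = S e'
          · exact (he' hS₁).elim
          · obtain ⟨p, q, h1, h2, h3⟩ := hch₁ e' hS₁
            exact ⟨p, q, h1, List.mem_cons_of_mem _ h2, List.mem_cons_of_mem _ h3⟩
    · -- used edge oriented w₁ → w; cancel it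
      have hends : G.ends e = s(w₁, w) := hval e w₁ w hsome
      have hS₁e : S₁ e = S e := by
        by_contra hne
        obtain ⟨p, q, hpq, hp, hq⟩ := hch₁ e hne
        rw [hends] at hpq
        rcases Sym2.eq_iff.mp hpq with ⟨rfl, rfl⟩ | ⟨rfl, rfl⟩
        · exact hwnot hq
        · exact hwnot hp
      have hS₁some : S₁ e = some (w₁, w) := by rw [hS₁e, hsome]
      refine ⟨Function.update S₁ e none, ?_, ?_, ?_⟩
      · intro e' a b h
        by_cases he : e' = e
        · subst he
          rw [Function.update_self] at h
          exact nomatch h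
        · rw [Function.update_of_ne he] at h
          exact hval₁ e' a b h
      · intro x
        rw [exc_update_del S₁ e w₁ w hS₁some x, hexc₁ x]
        have hx : ¬(x = w₁ ∧ x = w) := by
          rintro ⟨rfl, rfl⟩
          exact hwnot (List.mem_cons_self)
        by_cases h1 : x = v <;> by_cases h2 : x = w <;> by_cases h3 : x = w₁ <;>
          simp [h1, h2, h3] <;> omega
      · intro e' he'
        by_cases he : e' = e
        · subst he
          exact ⟨w₁, w, hends, List.mem_cons_of_mem _ (List.mem_cons_self),
            List.mem_cons_self⟩
        · rw [Function.update_of_ne he] at he'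
          by_cases hS₁ : S₁ e' = S e'
          · exact (he' hS₁).elim
          · obtain ⟨p, q, h1, h2, h3⟩ := hch₁ e' hS₁
            exact ⟨p, q, h1, List.mem_cons_of_mem _ h2, List.mem_cons_of_mem _ h3⟩

end Aug

end Multigraph
namespace Multigraph

open Finset

open scoped Classical

variable {V : Type u} {E : Type v}

section Menger

variable [Fintype V] [Fintype E] (G : Multigraph V E)

lemma flow_succ {S : E → Option (V × V)} {u v : V} {m k : ℕ} (hf : G.IsFlow S u v m)
    (huv : u ≠ v) (hmk : m < k)
    (hcut : ∀ X : Set V, u ∈ X → v ∉ X → k ≤ G.dcut X) :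
    ∃ S', G.IsFlow S' u v (m + 1) := by
  have hreach : Relation.ReflTransGen (G.Rstep S) u v := by
    by_contra hv
    set X := {x | Relation.ReflTransGen (G.Rstep S) u x} with hX
    have hvX : v ∉ X := hv
    have huX : u ∈ X := Relation.ReflTransGen.refl
    have hout : G.cutF X = outX S X := by
      ext e
      simp only [cutF, outX, mem_filter, mem_univ, true_and]
      constructor
      · rintro ⟨a, b, hends, ha, hb⟩
        rcases hSe : S e with _ | ⟨p, q⟩
        · exact ((hb (Relation.ReflTransGen.tail ha (Or.inl ⟨e, hSe, hends⟩)))).elim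
        · have hpq : G.ends e = s(p, q) := hf.1 e p q hSe
          rw [hends] at hpq
          rcases Sym2.eq_iff.mp hpq with ⟨rfl, rfl⟩ | ⟨rfl, rfl⟩
          · exact ⟨a, b, rfl, ha, hb⟩
          · exact ((hb (Relation.ReflTransGen.tail ha (Or.inr ⟨e, hSe⟩))).elim)
      · rintro ⟨a, b, hSe, ha, hb⟩
        exact ⟨a, b, hf.1 e a b hSe, ha, hb⟩
    have hin : inX S X = ∅ := by
      rw [Finset.eq_empty_iff_forall_notMem]
      intro e he
      simp only [inX, mem_filter, mem_univ, true_and] at he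
      obtain ⟨a, b, hSe, ha, hb⟩ := he
      exact ha (Relation.ReflTransGen.tail hb (Or.inr ⟨e, hSe⟩))
    have hsum := G.flow_sum hf huv X huX hvX
    rw [hin] at hsum
    simp only [card_empty, Nat.cast_zero, zero_sub, neg_inj, Nat.cast_inj] at hsum
    have hd : G.dcut X = m := by rw [dcut, hout, hsum]
    have := hcut X huX hvX
    omega
  obtain ⟨l, hchain, hlast, hnodup⟩ := exists_nodup_chain hreach
  obtain ⟨S', hval', hexc', -⟩ := G.augment_chain l S u hf.1 hchain hlast hnodup
  refine ⟨S', hval', ?_, ?_, ?_⟩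
  · rw [hexc' u, hf.2.1, if_neg huv, if_pos rfl]
    push_cast
    ring
  · rw [hexc' v, hf.2.2.1, if_pos rfl, if_neg (Ne.symm huv)]
    push_cast
    ring
  · intro w hwu hwv
    rw [hexc' w, hf.2.2.2 w hwu hwv, if_neg hwv, if_neg hwu]
    ring

lemma flow_exists {u v : V} (huv : u ≠ v) (k : ℕ)
    (hcut : ∀ X : Set V, u ∈ X → v ∉ X → k ≤ G.dcut X) :
    ∃ S, G.IsFlow S u v k := by
  have hzero : G.IsFlow (fun _ => none) u v 0 := by
    have hexc : ∀ w, exc (fun (_ : E) => none : E → Option (V × V)) w = 0 := by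
      intro w
      have h1 : inw (fun (_ : E) => none : E → Option (V × V)) w = ∅ := by
        rw [Finset.eq_empty_iff_forall_notMem]
        intro e he
        obtain ⟨a, ha⟩ := mem_inw.mp he
        exact nomatch ha
      have h2 : outw (fun (_ : E) => none : E → Option (V × V)) w = ∅ := by
        rw [Finset.eq_empty_iff_forall_notMem]
        intro e he
        obtain ⟨a, ha⟩ := mem_outw.mp he
        exact nomatch ha
      rw [exc, h1, h2]
      simp
    exact ⟨fun e a b h => (nomatch h), by rw [hexc]; simp, by rw [hexc]; simp,
      fun w _ _ => hexc w⟩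
  have hall : ∀ m, m ≤ k → ∃ S, G.IsFlow S u v m := by
    intro m
    induction m with
    | zero => exact fun _ => ⟨_, hzero⟩
    | succ m ihm =>
      intro hm
      obtain ⟨S, hS⟩ := ihm (by omega)
      exact G.flow_succ hS huv (by omega) hcut
  exact hall k le_rfl

lemma reach_sink {S : E → Option (V × V)} {u v : V} {m : ℕ} (hf : G.IsFlow S u v m)
    (huv : u ≠ v) (hm : 0 < m) :
    Relation.ReflTransGen (Sstep S) u v := by
  by_contra hv
  set X := {x | Relation.ReflTransGen (Sstep S) u x} with hX
  have hvX : v ∉ X := hv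
  have huX : u ∈ X := Relation.ReflTransGen.refl
  have hout : outX S X = ∅ := by
    rw [Finset.eq_empty_iff_forall_notMem]
    intro e he
    simp only [outX, mem_filter, mem_univ, true_and] at he
    obtain ⟨a, b, hSe, ha, hb⟩ := he
    exact hb (Relation.ReflTransGen.tail ha ⟨e, hSe⟩)
  have hsum := G.flow_sum hf huv X huX hvX
  rw [hout] at hsum
  simp only [card_empty, Nat.cast_zero, sub_zero] at hsum
  have : (0 : ℤ) ≤ ((inX S X).card : ℤ) := Int.ofNat_nonneg _
  omega

lemma extract_chain {v : V} :
    ∀ (l : List V) (S : E → Option (V × V)) (w : V), G.ValidO S →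
      List.Chain (Sstep S) w l →
      (w :: l).getLast (List.cons_ne_nil _ _) = v → (w :: l).Nodup →
      ∃ (W : G.Walk w v) (S' : E → Option (V × V)),
        W.support = w :: l ∧ G.ValidO S' ∧
        (∀ x, exc S' x = exc S x - (if x = v then 1 else 0) + (if x = w then 1 else 0)) ∧
        (∀ e, e ∈ W.edges → S' e = none) ∧
        (∀ e, e ∉ W.edges → S' e = S e) ∧
        (∀ e, e ∈ W.edges → ∃ p q, S e = some (p, q) ∧ p ∈ (w :: l) ∧ q ∈ (w :: l)) := by
  intro l
  induction l with
  | nil =>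
    intro S w hval _ hlast _
    have hw : w = v := by simpa using hlast
    subst hw
    refine ⟨Walk.nil w, S, rfl, hval, fun x => by simp, ?_, fun e _ => rfl, ?_⟩
    · intro e he
      simp [Walk.edges] at he
    · intro e he
      simp [Walk.edges] at he
  | cons w₁ t ihl =>
    intro S w hval hchain hlast hnodup
    have hchain' : List.Chain (Sstep S) w₁ t := (List.chain_cons.mp hchain).2
    obtain ⟨e₀, hSe₀⟩ : Sstep S w w₁ := (List.chain_cons.mp hchain).1
    have hends₀ : G.ends e₀ = s(w, w₁) := hval e₀ w w₁ hSe₀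
    have hlast' : (w₁ :: t).getLast (List.cons_ne_nil _ _) = v := by
      rwa [List.getLast_cons_cons] at hlast
    have hnodup' : (w₁ :: t).Nodup := (List.nodup_cons.mp hnodup).2
    have hwnot : w ∉ w₁ :: t := (List.nodup_cons.mp hnodup).1
    obtain ⟨W₁, S₁, hsup₁, hval₁, hexc₁, hnone₁, hkeep₁, hdart₁⟩ :=
      ihl S w₁ hval hchain' hlast' hnodup'
    have he₀not : e₀ ∉ W₁.edges := by
      intro hmem
      obtain ⟨p, q, hpq, hp, hq⟩ := hdart₁ e₀ hmem
      rw [hSe₀, Option.some.injEq, Prod.ext_iff] at hpq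
      obtain ⟨rfl, rfl⟩ := hpq
      exact hwnot hp
    have hS₁e₀ : S₁ e₀ = some (w, w₁) := by rw [hkeep₁ e₀ he₀not, hSe₀]
    refine ⟨Walk.cons e₀ hends₀ W₁, Function.update S₁ e₀ none, ?_, ?_, ?_, ?_, ?_, ?_⟩
    · show w :: W₁.support = w :: w₁ :: t
      rw [hsup₁]
    · intro e' a b h
      by_cases he : e' = e₀
      · subst he
        rw [Function.update_self] at h
        exact nomatch h
      · rw [Function.update_of_ne he] at h
        exact hval₁ e' a b h
    · intro x
      rw [exc_update_del S₁ e₀ w w₁ hS₁e₀ x, hexc₁ x]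
      by_cases h1 : x = v <;> by_cases h2 : x = w <;> by_cases h3 : x = w₁ <;>
        simp [h1, h2, h3] <;> omega
    · intro e he
      rcases List.mem_cons.mp he with rfl | he'
      · exact Function.update_self _ _ _
      · have hne : e ≠ e₀ := fun h => he₀not (h ▸ he')
        rw [Function.update_of_ne hne]
        exact hnone₁ e he'
    · intro e he
      have hne : e ≠ e₀ := fun h => he (h ▸ List.mem_cons_self)
      have he' : e ∉ W₁.edges := fun h => he (List.mem_cons_of_mem _ h)
      rw [Function.update_of_ne hne]
      exact hkeep₁ e he'
    · intro e he
      rcases List.mem_cons.mp he with rfl | he'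
      · exact ⟨w, w₁, hSe₀, List.mem_cons_self,
          List.mem_cons_of_mem _ (List.mem_cons_self)⟩
      · obtain ⟨p, q, h1, h2, h3⟩ := hdart₁ e he'
        exact ⟨p, q, h1, List.mem_cons_of_mem _ h2, List.mem_cons_of_mem _ h3⟩

lemma extract : ∀ (m : ℕ) (S : E → Option (V × V)) {u v : V}, u ≠ v → G.IsFlow S u v m →
    ∃ P : Fin m → G.Walk u v, (∀ i, (P i).IsPath) ∧
      (∀ i j, i ≠ j → ∀ e, e ∈ (P i).edges → e ∉ (P j).edges) ∧
      (∀ i e, e ∈ (P i).edges → S e ≠ none) := by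
  intro m
  induction m with
  | zero =>
    intro S u v huv hf
    exact ⟨fun i => i.elim0, fun i => i.elim0, fun i => i.elim0, fun i => i.elim0⟩
  | succ m ihm =>
    intro S u v huv hf
    have hreach := G.reach_sink hf huv (Nat.succ_pos m)
    obtain ⟨l, hchain, hlast, hnodup⟩ := exists_nodup_chain hreach
    obtain ⟨W, S', hsup, hval', hexc', hnone', hkeep', hdart'⟩ :=
      G.extract_chain l S u hf.1 hchain hlast hnodup
    have hf' : G.IsFlow S' u v m := by
      refine ⟨hval', ?_, ?_, ?_⟩
      · rw [hexc' u, hf.2.1, if_neg huv, if_pos rfl]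
        push_cast
        ring
      · rw [hexc' v, hf.2.2.1, if_pos rfl, if_neg (Ne.symm huv)]
        push_cast
        ring
      · intro x hxu hxv
        rw [hexc' x, hf.2.2.2 x hxu hxv, if_neg hxv, if_neg hxu]
        ring
    obtain ⟨P', hpath', hdisj', hused'⟩ := ihm S' huv hf'
    have hWnotP' : ∀ i e, e ∈ (P' i).edges → e ∉ W.edges := by
      intro i e heP heW
      exact (hused' i e heP) (hnone' e heW)
    refine ⟨fun i => Fin.cases W (fun j => P' j) i, ?_, ?_, ?_⟩
    · intro i
      induction i using Fin.cases with
      | zero =>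
        show W.IsPath
        rw [Walk.IsPath, hsup]
        exact hnodup
      | succ j =>
        exact hpath' j
    · intro i j hij
      induction i using Fin.cases with
      | zero =>
        induction j using Fin.cases with
        | zero => exact (hij rfl).elim
        | succ j' =>
          intro e he
          simp only [Fin.cases_zero, Fin.cases_succ] at he ⊢
          exact fun heP => hWnotP' j' e heP he
      | succ i' =>
        induction j using Fin.cases with
        | zero =>
          intro e he
          simp only [Fin.cases_zero, Fin.cases_succ] at he ⊢
          exact hWnotP' i' e he
        | succ j' =>
          intro e he
          simp only [Fin.cases_succ] at he ⊢
          have : i' ≠ j' := fun h => hij (by rw [h])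
          exact hdisj' i' j' this e he
    · intro i e he
      induction i using Fin.cases with
      | zero =>
        simp only [Fin.cases_zero] at he
        obtain ⟨p, q, h1, -, -⟩ := hdart' e he
        rw [h1]
        exact fun h => nomatch h
      | succ j =>
        simp only [Fin.cases_succ] at he
        have hnW : e ∉ W.edges := hWnotP' j e he
        rw [← hkeep' e hnW]
        exact hused' j e he

/-- **Menger's theorem** (edge version) for multigraphs. -/
theorem menger (u v : V) (huv : u ≠ v) (k : ℕ)
    (hcut : ∀ X : Set V, u ∈ X → v ∉ X → k ≤ G.dcut X) :
    ∃ P : Fin k → G.Walk u v, (∀ i, (P i).IsPath) ∧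
      ∀ i j, i ≠ j → ∀ e, e ∈ (P i).edges → e ∉ (P j).edges := by
  obtain ⟨S, hS⟩ := G.flow_exists huv k hcut
  obtain ⟨P, h1, h2, -⟩ := G.extract k S huv hS
  exact ⟨P, h1, h2⟩

end Menger

end Multigraph
namespace Multigraph

open Finset

open scoped Classical

variable {V : Type u} {E : Type v}

section Cuts

variable [Fintype V] [Fintype E] (G : Multigraph V E)

/-- Number of edges with one end in `A`, other end in `B`. -/
noncomputable def ecount (A B : Set V) : ℕ :=
  (univ.filter (fun e => ∃ a b, G.ends e = s(a, b) ∧ a ∈ A ∧ b ∈ B)).card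

/-- Number of edges from `sv` into `X`. -/
noncomputable def bcount (sv : V) (X : Set V) : ℕ :=
  (univ.filter (fun e => ∃ w, G.ends e = s(sv, w) ∧ w ∈ X)).card

/-- Number of edges at `sv`. -/
noncomputable def degF (sv : V) : ℕ := (univ.filter (fun e => sv ∈ G.ends e)).card

lemma exists_ends (e : E) : ∃ p q, G.ends e = s(p, q) :=
  Sym2.ind (fun p q => ⟨p, q, rfl⟩) (G.ends e)

lemma crossing_iff {X : Set V} {e : E} {p q : V} (h : G.ends e = s(p, q)) :
    (∃ a b, G.ends e = s(a, b) ∧ a ∈ X ∧ b ∉ X) ↔ ((p ∈ X ∧ q ∉ X) ∨ (q ∈ X ∧ p ∉ X)) := by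
  constructor
  · rintro ⟨a, b, hab, ha, hb⟩
    rw [h] at hab
    rcases Sym2.eq_iff.mp hab with ⟨rfl, rfl⟩ | ⟨rfl, rfl⟩
    · exact Or.inl ⟨ha, hb⟩
    · exact Or.inr ⟨ha, hb⟩
  · rintro (⟨h1, h2⟩ | ⟨h1, h2⟩)
    · exact ⟨p, q, h, h1, h2⟩
    · exact ⟨q, p, h.trans (Sym2.eq_swap), h1, h2⟩

lemma between_iff {A B : Set V} {e : E} {p q : V} (h : G.ends e = s(p, q)) :
    (∃ a b, G.ends e = s(a, b) ∧ a ∈ A ∧ b ∈ B) ↔ ((p ∈ A ∧ q ∈ B) ∨ (q ∈ A ∧ p ∈ B)) := by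
  constructor
  · rintro ⟨a, b, hab, ha, hb⟩
    rw [h] at hab
    rcases Sym2.eq_iff.mp hab with ⟨rfl, rfl⟩ | ⟨rfl, rfl⟩
    · exact Or.inl ⟨ha, hb⟩
    · exact Or.inr ⟨ha, hb⟩
  · rintro (⟨h1, h2⟩ | ⟨h1, h2⟩)
    · exact ⟨p, q, h, h1, h2⟩
    · exact ⟨q, p, h.trans (Sym2.eq_swap), h1, h2⟩

lemma sedge_iff {sv : V} {X : Set V} {e : E} {p q : V} (h : G.ends e = s(p, q)) :
    (∃ w, G.ends e = s(sv, w) ∧ w ∈ X) ↔ ((p = sv ∧ q ∈ X) ∨ (q = sv ∧ p ∈ X)) := by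
  constructor
  · rintro ⟨w, hw, hwX⟩
    rw [h] at hw
    rcases Sym2.eq_iff.mp hw with ⟨rfl, rfl⟩ | ⟨rfl, rfl⟩
    · exact Or.inl ⟨rfl, hwX⟩
    · exact Or.inr ⟨rfl, hwX⟩
  · rintro (⟨h1, h2⟩ | ⟨h1, h2⟩)
    · exact ⟨q, by rw [h, h1], h2⟩
    · exact ⟨p, by rw [h, h1, Sym2.eq_swap], h2⟩

lemma smem_iff {sv : V} {e : E} {p q : V} (h : G.ends e = s(p, q)) :
    sv ∈ G.ends e ↔ (p = sv ∨ q = sv) := by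
  rw [h, Sym2.mem_iff]
  constructor
  · rintro (rfl | rfl)
    · exact Or.inl rfl
    · exact Or.inr rfl
  · rintro (rfl | rfl)
    · exact Or.inl rfl
    · exact Or.inr rfl

lemma dcut_submod (X Y : Set V) :
    G.dcut X + G.dcut Y
      = G.dcut (X ∪ Y) + G.dcut (X ∩ Y) + 2 * G.ecount (X \ Y) (Y \ X) := by
  simp only [dcut, cutF, ecount, card_filter, Finset.mul_sum, ← Finset.sum_add_distrib]
  refine Finset.sum_congr rfl (fun e _ => ?_)
  obtain ⟨p, q, hpq⟩ := G.exists_ends e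
  simp only [G.crossing_iff hpq, G.between_iff hpq]
  simp only [Set.mem_union, Set.mem_inter_iff, Set.mem_diff]
  by_cases h1 : p ∈ X <;> by_cases h2 : p ∈ Y <;> by_cases h3 : q ∈ X <;> by_cases h4 : q ∈ Y <;>
    simp [h1, h2, h3, h4]

lemma dcut_posimod (X Y : Set V) :
    G.dcut X + G.dcut Y
      = G.dcut (X \ Y) + G.dcut (Y \ X) + 2 * G.ecount (X ∩ Y) ((X ∪ Y)ᶜ) := by
  simp only [dcut, cutF, ecount, card_filter, Finset.mul_sum, ← Finset.sum_add_distrib]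
  refine Finset.sum_congr rfl (fun e _ => ?_)
  obtain ⟨p, q, hpq⟩ := G.exists_ends e
  simp only [G.crossing_iff hpq, G.between_iff hpq]
  simp only [Set.mem_union, Set.mem_inter_iff, Set.mem_diff, Set.mem_compl_iff]
  by_cases h1 : p ∈ X <;> by_cases h2 : p ∈ Y <;> by_cases h3 : q ∈ X <;> by_cases h4 : q ∈ Y <;>
    simp [h1, h2, h3, h4]

lemma dcut_disjoint_union {A B : Set V} (hAB : ∀ x, x ∈ A → x ∉ B) :
    G.dcut (A ∪ B) + 2 * G.ecount A B = G.dcut A + G.dcut B := by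
  simp only [dcut, cutF, ecount, card_filter, Finset.mul_sum, ← Finset.sum_add_distrib]
  refine Finset.sum_congr rfl (fun e _ => ?_)
  obtain ⟨p, q, hpq⟩ := G.exists_ends e
  simp only [G.crossing_iff hpq, G.between_iff hpq]
  simp only [Set.mem_union]
  by_cases h1 : p ∈ A <;> by_cases h2 : p ∈ B <;> by_cases h3 : q ∈ A <;> by_cases h4 : q ∈ B
  all_goals first
    | exact absurd h2 (hAB p h1)
    | exact absurd h4 (hAB q h3)
    | simp [h1, h2, h3, h4]

lemma dcut_compl_s {sv : V} {X : Set V} (hsv : sv ∉ X) :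
    G.dcut {x | x ∉ X ∧ x ≠ sv} + 2 * G.bcount sv X = G.dcut X + G.degF sv := by
  simp only [dcut, cutF, bcount, degF, card_filter, Finset.mul_sum, ← Finset.sum_add_distrib]
  refine Finset.sum_congr rfl (fun e _ => ?_)
  obtain ⟨p, q, hpq⟩ := G.exists_ends e
  have hploop : p ≠ q := by
    intro h
    exact G.no_loops e (by rw [hpq, h]; exact Sym2.mk_isDiag_iff.mpr rfl)
  simp only [G.crossing_iff hpq, G.sedge_iff hpq, G.smem_iff hpq]
  simp only [Set.mem_setOf_eq]
  by_cases h1 : p = sv <;> by_cases h2 : q = sv <;>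
    by_cases h3 : p ∈ X <;> by_cases h4 : q ∈ X
  all_goals first
    | exact absurd (h1.trans h2.symm) hploop
    | (subst h1; exact absurd h3 hsv)
    | (subst h2; exact absurd h4 hsv)
    | simp [h1, h2, h3, h4, hploop, hsv]
  
lemma bcount_modular (sv : V) (X Y : Set V) :
    G.bcount sv X + G.bcount sv Y = G.bcount sv (X ∪ Y) + G.bcount sv (X ∩ Y) := by
  simp only [bcount, card_filter, ← Finset.sum_add_distrib]
  refine Finset.sum_congr rfl (fun e _ => ?_)
  obtain ⟨p, q, hpq⟩ := G.exists_ends e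
  have hploop : p ≠ q := by
    intro h
    exact G.no_loops e (by rw [hpq, h]; exact Sym2.mk_isDiag_iff.mpr rfl)
  simp only [G.sedge_iff hpq]
  simp only [Set.mem_union, Set.mem_inter_iff]
  by_cases h1 : p = sv <;> by_cases h2 : q = sv <;>
    by_cases h3 : p ∈ X <;> by_cases h4 : q ∈ X <;> by_cases h5 : p ∈ Y <;> by_cases h6 : q ∈ Y
  all_goals first
    | exact absurd (h1.trans h2.symm) hploop
    | simp [h1, h2, h3, h4, h5, h6]

lemma bcount_full {sv : V} {X : Set V} (h : ∀ (e : E) (w : V), G.ends e = s(sv, w) → w ∈ X) :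
    G.bcount sv X = G.degF sv := by
  simp only [bcount, degF, card_filter]
  refine Finset.sum_congr rfl (fun e _ => ?_)
  obtain ⟨p, q, hpq⟩ := G.exists_ends e
  simp only [G.sedge_iff hpq, G.smem_iff hpq]
  congr 1
  apply propext
  constructor
  · rintro (⟨h1, _⟩ | ⟨h1, _⟩)
    · exact Or.inl h1
    · exact Or.inr h1
  · rintro (rfl | rfl)
    · exact Or.inl ⟨rfl, h e q (by rw [hpq])⟩
    · exact Or.inr ⟨rfl, h e p (by rw [hpq, Sym2.eq_swap])⟩

lemma ecount_pos {A B : Set V} (e : E) (p q : V) (h : G.ends e = s(p, q))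
    (hp : p ∈ A) (hq : q ∈ B) : 1 ≤ G.ecount A B := by
  rw [ecount]
  exact Finset.card_pos.mpr ⟨e, mem_filter.mpr ⟨mem_univ _, p, q, h, hp, hq⟩⟩

lemma bcount_pos {sv : V} {X : Set V} (e : E) (w : V) (h : G.ends e = s(sv, w))
    (hw : w ∈ X) : 1 ≤ G.bcount sv X := by
  rw [bcount]
  exact Finset.card_pos.mpr ⟨e, mem_filter.mpr ⟨mem_univ _, w, h, hw⟩⟩

lemma degree_eq_degF (sv : V) : G.degree sv = G.degF sv := by
  rw [degree, degF]
  rw [Set.ncard_eq_toFinset_card']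
  congr 1
  ext e
  simp

/-- a walk from inside `X` to outside `X` uses a crossing edge. -/
lemma walk_crossing {G : Multigraph V E} {X : Set V} :
    ∀ {a b : V} (p : G.Walk a b), a ∈ X → b ∉ X →
      ∃ e ∈ p.edges, ∃ x y, G.ends e = s(x, y) ∧ x ∈ X ∧ y ∉ X := by
  intro a b p
  induction p with
  | nil v =>
    intro h1 h2
    exact (h2 h1).elim
  | @cons a c b e h q ih =>
    intro ha hb
    by_cases hc : c ∈ X
    · obtain ⟨e', he', hx⟩ := ih hc hb
      exact ⟨e', List.mem_cons_of_mem _ he', hx⟩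
    · exact ⟨e, List.mem_cons_self, a, c, h, ha, hc⟩

/-- The easy direction: `k` edge-disjoint paths force every separating cut
to have at least `k` edges. -/
lemma dcut_lower {G : Multigraph V E} {k : ℕ} {a b : V} {X : Set V}
    (ha : a ∈ X) (hb : b ∉ X)
    (P : Fin k → G.Walk a b)
    (hdisj : ∀ i j, i ≠ j → ∀ e, e ∈ (P i).edges → e ∉ (P j).edges) :
    k ≤ G.dcut X := by
  have hcr : ∀ i, ∃ e, e ∈ (P i).edges ∧ e ∈ G.cutF X := by
    intro i
    obtain ⟨e, he, x, y, h1, h2, h3⟩ := walk_crossing (P i) ha hb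
    exact ⟨e, he, mem_filter.mpr ⟨mem_univ _, x, y, h1, h2, h3⟩⟩
  choose f hf1 hf2 using hcr
  have hinj : Function.Injective f := by
    intro i j hij
    by_contra hne
    exact (hdisj i j hne (f i) (hf1 i)) (hij ▸ hf1 j)
  calc k = Fintype.card (Fin k) := (Fintype.card_fin k).symm
    _ = (Finset.univ.image f).card := (Finset.card_image_of_injective _ hinj).symm
    _ ≤ (G.cutF X).card := Finset.card_le_card (fun e he => by
        obtain ⟨i, _, rfl⟩ := Finset.mem_image.mp he
        exact hf2 i)
    _ = G.dcut X := rfl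

lemma dcut_compl (X : Set V) : G.dcut X = G.dcut Xᶜ := by
  simp only [dcut, cutF]
  congr 1
  ext e
  simp only [mem_filter, mem_univ, true_and]
  obtain ⟨p, q, hpq⟩ := G.exists_ends e
  rw [G.crossing_iff hpq, G.crossing_iff hpq]
  simp only [Set.mem_compl_iff, not_not]
  tauto

end Cuts

end Multigraph
namespace Multigraph

open Finset

open scoped Classical

variable {V : Type u} {E : Type v}

section Dangerous

variable [Fintype V] [Fintype E] (G : Multigraph V E) (sv : V) (k : ℕ)

/-- A nonempty proper subset of `V ∖ {sv}`. -/
def ValidCut (X : Set V) : Prop :=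
  sv ∉ X ∧ X.Nonempty ∧ ∃ w, w ∉ X ∧ w ≠ sv

/-- A dangerous set: a valid cut of size at most `k+1`. -/
def Dangerous (X : Set V) : Prop := ValidCut sv X ∧ G.dcut X ≤ k + 1

variable {G} {sv} {k}

lemma valid_dcut_ge (hG : G.SEdgeConnected sv k) {X : Set V} (hX : ValidCut sv X) :
    k ≤ G.dcut X := by
  obtain ⟨hsv, ⟨u, hu⟩, ⟨w, hw, hwsv⟩⟩ := hX
  have husv : u ≠ sv := fun h => hsv (h ▸ hu)
  have huw : u ≠ w := fun h => hw (h ▸ hu)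
  obtain ⟨P, hP, hdisj⟩ := hG u w husv hwsv huw
  exact dcut_lower hu hw P hdisj

lemma bcount_le_of_dangerous (hG : G.SEdgeConnected sv k) (hD : Even (G.degF sv))
    {X : Set V} (hX : G.Dangerous sv k X) : 2 * G.bcount sv X ≤ G.degF sv := by
  obtain ⟨⟨hsv, ⟨u, hu⟩, ⟨w, hw, hwsv⟩⟩, hdX⟩ := hX
  have hco : ValidCut sv {x | x ∉ X ∧ x ≠ sv} := by
    refine ⟨fun h => h.2 rfl, ⟨w, hw, hwsv⟩, ⟨u, ?_, fun h => hsv (h ▸ hu)⟩⟩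
    intro h
    exact h.1 hu
  have hk1 := valid_dcut_ge hG hco
  have hk2 := G.dcut_compl_s (sv := sv) (X := X) hsv
  obtain ⟨dd, hdd⟩ := hD
  omega

lemma dangerous_union (hG : G.SEdgeConnected sv k) (hk : Even k) (hD : Even (G.degF sv))
    {X Y : Set V} (hX : G.Dangerous sv k X) (hY : G.Dangerous sv k Y)
    {w : V} (hwX : w ∈ X) (hwY : w ∈ Y) (e₀ : E) (h₀ : G.ends e₀ = s(sv, w)) :
    G.Dangerous sv k (X ∪ Y) := by
  by_cases hXY : X ⊆ Y
  · rw [Set.union_eq_self_of_subset_left hXY]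
    exact hY
  by_cases hYX : Y ⊆ X
  · rw [Set.union_eq_self_of_subset_right hYX]
    exact hX
  obtain ⟨x, hxX, hxY⟩ := Set.not_subset.mp hXY
  obtain ⟨z, hzY, hzX⟩ := Set.not_subset.mp hYX
  have hsvX : sv ∉ X := hX.1.1
  have hdX : G.dcut X ≤ k + 1 := hX.2
  have hsvY : sv ∉ Y := hY.1.1
  have hdY : G.dcut Y ≤ k + 1 := hY.2
  have hsvU : sv ∉ X ∪ Y := fun h => h.elim hsvX hsvY
  have hwsv : w ≠ sv := fun h => hsvX (h ▸ hwX)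
  have hxsv : x ≠ sv := fun h => hsvX (h ▸ hxX)
  have hzsv : z ≠ sv := fun h => hsvY (h ▸ hzY)
  have validI : ValidCut sv (X ∩ Y) :=
    ⟨fun h => hsvX h.1, ⟨w, hwX, hwY⟩, ⟨z, fun h => hzX h.1, hzsv⟩⟩
  have hproper : ∃ w', w' ∉ X ∪ Y ∧ w' ≠ sv := by
    by_contra hno
    push_neg at hno
    have bfull : G.bcount sv (X ∪ Y) = G.degF sv := by
      apply G.bcount_full
      intro e w' hw'
      have hw'sv : w' ≠ sv := by
        rintro rfl
        exact G.no_loops e (by rw [hw']; exact Sym2.mk_isDiag_iff.mpr rfl)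
      by_contra hmem
      exact hw'sv (hno w' hmem)
    have hbI : 1 ≤ G.bcount sv (X ∩ Y) := G.bcount_pos e₀ w h₀ ⟨hwX, hwY⟩
    have hbX := bcount_le_of_dangerous hG hD hX
    have hbY := bcount_le_of_dangerous hG hD hY
    have hmod := G.bcount_modular sv X Y
    obtain ⟨dd, hdd⟩ := hD
    omega
  refine ⟨⟨hsvU, ⟨w, Or.inl hwX⟩, hproper⟩, ?_⟩
  by_contra hbig
  push_neg at hbig
  have validU : ValidCut sv (X ∪ Y) := ⟨hsvU, ⟨w, Or.inl hwX⟩, hproper⟩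
  have hIk : k ≤ G.dcut (X ∩ Y) := valid_dcut_ge hG validI
  have hI1 := G.dcut_submod X Y
  have hI2 := G.dcut_posimod X Y
  have hm : 1 ≤ G.ecount (X ∩ Y) ((X ∪ Y)ᶜ) :=
    G.ecount_pos e₀ w sv (h₀.trans Sym2.eq_swap) ⟨hwX, hwY⟩ hsvU
  have validXY : ValidCut sv (X \ Y) :=
    ⟨fun h => hsvX h.1, ⟨x, hxX, hxY⟩, ⟨w, fun h => h.2 hwY, hwsv⟩⟩
  have validYX : ValidCut sv (Y \ X) :=
    ⟨fun h => hsvY h.1, ⟨z, hzY, hzX⟩, ⟨w, fun h => h.2 hwX, hwsv⟩⟩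
  have hXYk : k ≤ G.dcut (X \ Y) := valid_dcut_ge hG validXY
  have hYXk : k ≤ G.dcut (Y \ X) := valid_dcut_ge hG validYX
  have hI3 : G.dcut X + 2 * G.ecount (X ∩ Y) (X \ Y) = G.dcut (X ∩ Y) + G.dcut (X \ Y) := by
    have hdisj : ∀ x', x' ∈ X ∩ Y → x' ∉ X \ Y := fun x' h1 h2 => h2.2 h1.2
    have hun : (X ∩ Y) ∪ (X \ Y) = X := Set.inter_union_diff X Y
    have := G.dcut_disjoint_union hdisj
    rwa [hun] at this
  obtain ⟨kk, hkk⟩ := hk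
  omega

end Dangerous

end Multigraph
namespace Multigraph

open Finset

open scoped Classical

variable {V : Type u} {E : Type v}

lemma card_filter_subtype_eq {α : Type w} [Fintype α] (pr : α → Prop) [Fintype {a // pr a}]
    (Q : α → Prop) :
    (univ.filter (fun a : {a // pr a} => Q a.1)).card = (univ.filter (fun a => pr a ∧ Q a)).card := by
  refine Finset.card_bij (fun a _ => a.1) ?_ ?_ ?_
  · intro a ha
    simp only [mem_filter, mem_univ, true_and] at ha ⊢
    exact ⟨a.2, ha⟩
  · intro a _ b _ h
    exact Subtype.ext h
  · intro b hb
    simp only [mem_filter, mem_univ, true_and] at hb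
    exact ⟨⟨b, hb.1⟩, by simp [hb.2], rfl⟩

section LiftCut

variable [Fintype V] [Fintype E] (G : Multigraph V E) (sv : V) (k : ℕ)

lemma lift_dcut {e₁ e₂ : E} {x y : V}
    [hft : Fintype ({e : E // e ≠ e₁ ∧ e ≠ e₂} ⊕ PLift (x ≠ y))]
    (he : e₁ ≠ e₂) (hx : G.ends e₁ = s(sv, x)) (hy : G.ends e₂ = s(sv, y))
    (Z : Set V) (hsvZ : sv ∉ Z) :
    (G.lift e₁ e₂ x y).dcut Z + (if x ∈ Z then 1 else 0) + (if y ∈ Z then 1 else 0)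
      = G.dcut Z + (if x ≠ y ∧ ((x ∈ Z ∧ y ∉ Z) ∨ (y ∈ Z ∧ x ∉ Z)) then 1 else 0) := by
  set H := G.lift e₁ e₂ x y with hH
  have hcr : ∀ e : E, (∃ a b, G.ends e = s(a, b) ∧ a ∈ Z ∧ b ∉ Z) →
      e = e₁ ∨ e = e₂ ∨ (e ≠ e₁ ∧ e ≠ e₂) := by
    intro e _
    by_cases h1 : e = e₁
    · exact Or.inl h1
    by_cases h2 : e = e₂
    · exact Or.inr (Or.inl h2)
    exact Or.inr (Or.inr ⟨h1, h2⟩)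
  -- G-side decomposition
  have hGsplit : G.dcut Z
      = (univ.filter (fun e : E => (e ≠ e₁ ∧ e ≠ e₂) ∧
          ∃ a b, G.ends e = s(a, b) ∧ a ∈ Z ∧ b ∉ Z)).card
        + ((if (∃ a b, G.ends e₁ = s(a, b) ∧ a ∈ Z ∧ b ∉ Z) then 1 else 0)
        + (if (∃ a b, G.ends e₂ = s(a, b) ∧ a ∈ Z ∧ b ∉ Z) then 1 else 0)) := by
    rw [dcut, cutF, card_filter, card_filter]
    have hpt : ∀ e : E, (if (∃ a b, G.ends e = s(a, b) ∧ a ∈ Z ∧ b ∉ Z) then (1:ℕ) else 0)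
        = (if (e ≠ e₁ ∧ e ≠ e₂) ∧ (∃ a b, G.ends e = s(a, b) ∧ a ∈ Z ∧ b ∉ Z) then 1 else 0)
          + ((if e = e₁ ∧ (∃ a b, G.ends e = s(a, b) ∧ a ∈ Z ∧ b ∉ Z) then 1 else 0)
          + (if e = e₂ ∧ (∃ a b, G.ends e = s(a, b) ∧ a ∈ Z ∧ b ∉ Z) then 1 else 0)) := by
      intro e
      have he2 : ¬(e₂ = e₁) := fun h => he h.symm
      by_cases h1 : e = e₁ <;> by_cases h2 : e = e₂ <;>
        by_cases h3 : (∃ a b, G.ends e = s(a, b) ∧ a ∈ Z ∧ b ∉ Z) <;>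
        first
          | (exact absurd (h1.symm.trans h2) he)
          | simp [h1, h2, h3, he, he2]
    rw [Finset.sum_congr rfl (fun e _ => hpt e), Finset.sum_add_distrib, Finset.sum_add_distrib]
    congr 1
    congr 1
    · have : ∀ e : E, (if e = e₁ ∧ (∃ a b, G.ends e = s(a, b) ∧ a ∈ Z ∧ b ∉ Z) then (1:ℕ) else 0)
          = if e = e₁ then (if (∃ a b, G.ends e₁ = s(a, b) ∧ a ∈ Z ∧ b ∉ Z) then 1 else 0) else 0 := by
        intro e
        by_cases h1 : e = e₁
        · subst h1; simp
        · simp [h1]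
      rw [Finset.sum_congr rfl (fun e _ => this e), Finset.sum_ite_eq' univ e₁]
      simp
    · have : ∀ e : E, (if e = e₂ ∧ (∃ a b, G.ends e = s(a, b) ∧ a ∈ Z ∧ b ∉ Z) then (1:ℕ) else 0)
          = if e = e₂ then (if (∃ a b, G.ends e₂ = s(a, b) ∧ a ∈ Z ∧ b ∉ Z) then 1 else 0) else 0 := by
        intro e
        by_cases h1 : e = e₂
        · subst h1; simp
        · simp [h1]
      rw [Finset.sum_congr rfl (fun e _ => this e), Finset.sum_ite_eq' univ e₂]
      simp
  -- H-side decomposition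
  have hHsplit : H.dcut Z
      = (univ.filter (fun e : E => (e ≠ e₁ ∧ e ≠ e₂) ∧
          ∃ a b, G.ends e = s(a, b) ∧ a ∈ Z ∧ b ∉ Z)).card
        + (if x ≠ y ∧ (∃ a b, s(x, y) = s(a, b) ∧ a ∈ Z ∧ b ∉ Z) then 1 else 0) := by
    rw [dcut, cutF]
    rw [← Finset.card_toLeft_add_card_toRight]
    congr 1
    · have h1 : (univ.filter (fun ee : {e : E // e ≠ e₁ ∧ e ≠ e₂} ⊕ PLift (x ≠ y) =>
            ∃ a b, H.ends ee = s(a, b) ∧ a ∈ Z ∧ b ∉ Z)).toLeft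
          = univ.filter (fun a : {e : E // e ≠ e₁ ∧ e ≠ e₂} =>
            ∃ p q, G.ends a.1 = s(p, q) ∧ p ∈ Z ∧ q ∉ Z) := by
        ext a
        simp only [mem_toLeft, mem_filter, mem_univ, true_and]
        rfl
      rw [h1]
      refine Finset.card_bij (fun a _ => a.1) ?_ ?_ ?_
      · intro a ha
        simp only [mem_filter, mem_univ, true_and] at ha ⊢
        exact ⟨a.2, ha⟩
      · intro a _ b _ hab
        exact Subtype.ext hab
      · intro b hb
        simp only [mem_filter, mem_univ, true_and] at hb
        exact ⟨⟨b, hb.1⟩, by simp [hb.2], rfl⟩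
    · by_cases hxy : x = y
      · haveI : IsEmpty (PLift (x ≠ y)) := ⟨fun h => h.down hxy⟩
        rw [if_neg (fun h => h.1 hxy)]
        have : (univ.filter (fun e => ∃ a b, H.ends e = s(a, b) ∧ a ∈ Z ∧ b ∉ Z)).toRight = ∅ :=
          Finset.eq_empty_of_isEmpty _
        rw [this, Finset.card_empty]
      · haveI : Unique (PLift (x ≠ y)) :=
          { default := ⟨hxy⟩, uniq := fun a => Subsingleton.elim _ _ }
        have huniv : (univ : Finset (PLift (x ≠ y))) = {⟨hxy⟩} := by
          apply Finset.eq_singleton_iff_unique_mem.mpr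
          exact ⟨mem_univ _, fun a _ => Subsingleton.elim _ _⟩
        have : (univ.filter (fun e => ∃ a b, H.ends e = s(a, b) ∧ a ∈ Z ∧ b ∉ Z)).toRight
            = univ.filter (fun p : PLift (x ≠ y) => ∃ a b, s(x, y) = s(a, b) ∧ a ∈ Z ∧ b ∉ Z) := by
          ext p
          simp only [mem_toRight, mem_filter, mem_univ, true_and]
          rfl
        rw [this, huniv, Finset.filter_singleton]
        by_cases hc : (∃ a b, s(x, y) = s(a, b) ∧ a ∈ Z ∧ b ∉ Z)
        · rw [if_pos hc, if_pos ⟨hxy, hc⟩, Finset.card_singleton]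
        · rw [if_neg hc, if_neg (fun h => hc h.2), Finset.card_empty]
  have hc₁ : (∃ a b, G.ends e₁ = s(a, b) ∧ a ∈ Z ∧ b ∉ Z) ↔ x ∈ Z := by
    rw [G.crossing_iff hx]
    constructor
    · rintro (⟨h1, _⟩ | ⟨h1, _⟩)
      · exact absurd h1 hsvZ
      · exact h1
    · intro h
      exact Or.inr ⟨h, hsvZ⟩
  have hc₂ : (∃ a b, G.ends e₂ = s(a, b) ∧ a ∈ Z ∧ b ∉ Z) ↔ y ∈ Z := by
    rw [G.crossing_iff hy]
    constructor
    · rintro (⟨h1, _⟩ | ⟨h1, _⟩)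
      · exact absurd h1 hsvZ
      · exact h1
    · intro h
      exact Or.inr ⟨h, hsvZ⟩
  have hcn : (∃ a b, s(x, y) = s(a, b) ∧ a ∈ Z ∧ b ∉ Z) ↔ ((x ∈ Z ∧ y ∉ Z) ∨ (y ∈ Z ∧ x ∉ Z)) := by
    constructor
    · rintro ⟨a, b, hab, ha, hb⟩
      rcases Sym2.eq_iff.mp hab with ⟨rfl, rfl⟩ | ⟨rfl, rfl⟩
      · exact Or.inl ⟨ha, hb⟩
      · exact Or.inr ⟨ha, hb⟩
    · rintro (⟨h1, h2⟩ | ⟨h1, h2⟩)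
      · exact ⟨x, y, rfl, h1, h2⟩
      · exact ⟨y, x, Sym2.eq_swap, h1, h2⟩
  rw [hGsplit, hHsplit]
  simp only [hc₁, hc₂, hcn]
  by_cases h1 : x ∈ Z <;> by_cases h2 : y ∈ Z <;> by_cases h3 : x = y <;>
    simp [h1, h2, h3] <;> omega

end LiftCut

end Multigraph
namespace Multigraph

open Finset

open scoped Classical

variable {V : Type u} {E : Type v}

section LiftSec

variable [Fintype V] [Fintype E] (G : Multigraph V E) {sv : V} {k : ℕ}

lemma lift_sec (hG : G.SEdgeConnected sv k) {e₁ e₂ : E} {x y : V} (he : e₁ ≠ e₂)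
    (hx : G.ends e₁ = s(sv, x)) (hy : G.ends e₂ = s(sv, y))
    (hnod : ∀ Z : Set V, G.Dangerous sv k Z → ¬(x ∈ Z ∧ y ∈ Z)) :
    (G.lift e₁ e₂ x y).SEdgeConnected sv k := by
  letI : Fintype {e : E // e ≠ e₁ ∧ e ≠ e₂} := Fintype.ofFinite _
  letI : Fintype (PLift (x ≠ y)) := Fintype.ofFinite _
  intro u v hu hv huv
  have key : ∀ Z : Set V, ValidCut sv Z → k ≤ (G.lift e₁ e₂ x y).dcut Z := by
    intro Z hZ
    have hsvZ : sv ∉ Z := hZ.1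
    have hld := G.lift_dcut sv he hx hy Z hsvZ
    have hvk : k ≤ G.dcut Z := valid_dcut_ge hG hZ
    have hk2 : (x ∈ Z ∧ y ∈ Z) → k + 2 ≤ G.dcut Z := by
      intro hxy2
      by_contra hle
      exact hnod Z ⟨hZ, by omega⟩ hxy2
    by_cases hxy : x = y
    · subst hxy
      by_cases hxZ : x ∈ Z
      · have h2 := hk2 ⟨hxZ, hxZ⟩
        simp [hxZ] at hld
        omega
      · simp [hxZ] at hld
        omega
    · by_cases hxZ : x ∈ Z <;> by_cases hyZ : y ∈ Z
      · have h2 := hk2 ⟨hxZ, hyZ⟩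
        simp [hxZ, hyZ, hxy] at hld
        omega
      · simp [hxZ, hyZ, hxy] at hld
        omega
      · simp [hxZ, hyZ, hxy] at hld
        omega
      · simp [hxZ, hyZ, hxy] at hld
        omega
  apply (G.lift e₁ e₂ x y).menger u v huv k
  intro Z huZ hvZ
  by_cases hsvZ : sv ∈ Z
  · rw [(G.lift e₁ e₂ x y).dcut_compl Z]
    exact key Zᶜ ⟨fun h => h hsvZ, ⟨v, hvZ⟩, ⟨u, fun h => h huZ, hu⟩⟩
  · exact key Z ⟨hsvZ, ⟨u, huZ⟩, ⟨v, hvZ, hv⟩⟩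

lemma liftable_criterion (hG : G.SEdgeConnected sv k) {e₁ e₂ : E} {x y : V} (he : e₁ ≠ e₂)
    (hx : G.ends e₁ = s(sv, x)) (hy : G.ends e₂ = s(sv, y))
    (hnod : ∀ Z : Set V, G.Dangerous sv k Z → ¬(x ∈ Z ∧ y ∈ Z)) :
    G.Liftable sv k e₁ e₂ :=
  ⟨he, x, y, hx, hy, G.lift_sec hG he hx hy hnod⟩

end LiftSec

end Multigraph
open Finset in
open scoped Classical in
/-- **Lemma (Ok–Richter–Thomassen / Jordán).** Let `k` be a positive even integer and
`s` a vertex of an `(s,k)`-edge-connected finite graph `G`. If `deg(s)` is even and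
positive, then the complement of `L(G,s,k)` is disconnected. -/
theorem lifting_graph_even_degree {V : Type u} {E : Type v} [Finite V] [Finite E]
    (G : Multigraph V E) (s : V) (k : ℕ)
    (hk : 0 < k) (hke : Even k)
    (hG : G.SEdgeConnected s k)
    (heven : Even (G.degree s)) (hpos : 0 < G.degree s) :
    ¬ ((G.liftingGraph s k)ᶜ).Connected := by
  letI : Fintype V := Fintype.ofFinite V
  letI : Fintype E := Fintype.ofFinite E
  intro hconn
  rw [G.degree_eq_degF] at heven hpos
  -- endpoint of an edge at `s`
  have hxOf : ∀ f : {e : E // s ∈ G.ends e}, G.ends f.1 = s(s, Sym2.Mem.other f.2) :=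
    fun f => (Sym2.other_spec f.2).symm
  set xOf : {e : E // s ∈ G.ends e} → V := fun f => Sym2.Mem.other f.2 with hxOfdef
  have hxeq : ∀ (f : {e : E // s ∈ G.ends e}) (w : V), G.ends f.1 = s(s, w) → w = xOf f := by
    intro f w h
    have h2 := (hxOf f).symm.trans h
    rcases Sym2.eq_iff.mp h2 with ⟨-, h3⟩ | ⟨h3, h4⟩
    · exact h3.symm
    · exfalso
      apply G.no_loops f.1
      rw [hxOf f, h4]
      exact Sym2.mk_isDiag_iff.mpr rfl
  -- a base edge at `s`
  obtain ⟨e₀, he₀mem⟩ := Finset.card_pos.mp hpos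
  have he₀ : s ∈ G.ends e₀ := (mem_filter.mp he₀mem).2
  set f₀ : {e : E // s ∈ G.ends e} := ⟨e₀, he₀⟩ with hf₀def
  -- the class of f₀ under the "common dangerous set" relation
  set A : Set {e : E // s ∈ G.ends e} :=
    {g | (∃ Z : Set V, G.Dangerous s k Z ∧ xOf f₀ ∈ Z ∧ xOf g ∈ Z) ∨ g = f₀} with hAdef
  have hf₀A : f₀ ∈ A := Or.inr rfl
  -- every pair (f ∈ A, g ∉ A) is liftable
  have hA_B_lift : ∀ f, f ∈ A → ∀ g, g ∉ A → G.Liftable s k f.1 g.1 := by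
    intro f hf g hg
    have hfg : f.1 ≠ g.1 := by
      intro h
      exact hg (Subtype.ext h ▸ hf)
    have hnod : ∀ Z : Set V, G.Dangerous s k Z → ¬(xOf f ∈ Z ∧ xOf g ∈ Z) := by
      rintro Z hZ ⟨h1, h2⟩
      rcases hf with ⟨Z₀, hZ₀, h0, hfZ₀⟩ | rfl
      · have hU := Multigraph.dangerous_union hG hke heven hZ₀ hZ hfZ₀ h1 f.1 (hxOf f)
        exact hg (Or.inl ⟨Z₀ ∪ Z, hU, Or.inl h0, Or.inr h2⟩)
      · exact hg (Or.inl ⟨Z, hZ, h1, h2⟩)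
    exact G.liftable_criterion hG hfg (hxOf f) (hxOf g) hnod
  -- A is not everything
  have hB : ∃ g, g ∉ A := by
    by_contra hall
    push_neg at hall
    -- a second edge at `s`
    have h2card : 1 < (univ.filter (fun e => s ∈ G.ends e)).card := by
      obtain ⟨dd, hdd⟩ := heven
      have h1 : G.degF s = (univ.filter (fun e : E => s ∈ G.ends e)).card := rfl
      omega
    obtain ⟨e₁, he₁mem, he₁ne⟩ := Finset.exists_mem_ne h2card e₀
    have he₁ : s ∈ G.ends e₁ := (mem_filter.mp he₁mem).2
    set f₁ : {e : E // s ∈ G.ends e} := ⟨e₁, he₁⟩ with hf₁def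
    have hf₁ne : f₁ ≠ f₀ := fun h => he₁ne (congrArg Subtype.val h)
    obtain ⟨Zb, hZb, h0b, -⟩ := (hall f₁).resolve_right hf₁ne
    -- a dangerous set containing all endpoints
    letI : Fintype {e : E // s ∈ G.ends e} := Fintype.ofFinite _
    have hbig : ∀ T : Finset {e : E // s ∈ G.ends e},
        ∃ Z : Set V, G.Dangerous s k Z ∧ xOf f₀ ∈ Z ∧ ∀ g ∈ T, xOf g ∈ Z := by
      intro T
      induction T using Finset.induction_on with
      | empty => exact ⟨Zb, hZb, h0b, by simp⟩
      | @insert g T hgT ih =>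
        obtain ⟨Z, hZ, h0, hT⟩ := ih
        rcases hall g with ⟨Z₂, hZ₂, h0₂, hg₂⟩ | rfl
        · have hU := Multigraph.dangerous_union hG hke heven hZ hZ₂ h0 h0₂ f₀.1 (hxOf f₀)
          refine ⟨Z ∪ Z₂, hU, Or.inl h0, ?_⟩
          intro g' hg'
          rcases Finset.mem_insert.mp hg' with rfl | hg'T
          · exact Or.inr hg₂
          · exact Or.inl (hT g' hg'T)
        · refine ⟨Z, hZ, h0, ?_⟩
          intro g' hg'
          rcases Finset.mem_insert.mp hg' with rfl | hg'T
          · exact h0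
          · exact hT g' hg'T
    obtain ⟨U, hU, -, hUall⟩ := hbig univ
    have hfull : G.bcount s U = G.degF s := by
      apply G.bcount_full
      intro e w hw
      have hse : s ∈ G.ends e := by
        rw [hw]
        exact Sym2.mem_mk_left s w
      have := hxeq ⟨e, hse⟩ w hw
      rw [this]
      exact hUall ⟨e, hse⟩ (mem_univ _)
    have hble := Multigraph.bcount_le_of_dangerous hG heven hU
    omega
  obtain ⟨g₀, hg₀⟩ := hB
  -- A is closed under walks in the complement
  have hclosed : ∀ {a b : {e : E // s ∈ G.ends e}}
      (W : ((G.liftingGraph s k)ᶜ).Walk a b), a ∈ A → b ∈ A := by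
    intro a b W
    induction W with
    | nil => exact id
    | @cons a c b h p ih =>
      intro ha
      apply ih
      by_contra hc
      rw [SimpleGraph.compl_adj] at h
      exact h.2 (Or.inl (hA_B_lift a ha c hc))
  obtain ⟨W⟩ := hconn.preconnected f₀ g₀
  exact hg₀ (hclosed W hf₀A)
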